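/- If Φ = {φ_i}_{i=1}^n is a sequence of unit vectors in C^m with n ≥ m, then the coherence μ(Φ) = max_{i≠j} |⟨φ_i, φ_j⟩| satisfies μ(Φ) ≥ sqrt((n-m)/(m(n-1))). -/

import Mathlib

open scoped InnerProductSpace

open Finset Matrix in
/-- **Welch bound.** If `Φ` is a sequence of `n` unit vectors in `ℂ^m` with `n ≥ m`,
then the coherence `μ = max_{i ≠ j} |⟨Φ i, Φ j⟩|` satisfies
`μ ≥ √((n - m)/(m (n - 1)))`. -/
theorem welch_bound (m n : ℕ) (hmn : m ≤ n)
    (Φ : Fin n → EuclideanSpace ℂ (Fin m))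
    (hunit : ∀ i, ‖Φ i‖ = 1) (μ : ℝ)
    (hμ : IsGreatest {r : ℝ | ∃ i j : Fin n, i ≠ j ∧ r = ‖⟪Φ i, Φ j⟫_ℂ‖} μ) :
    Real.sqrt (((n : ℝ) - m) / (m * ((n : ℝ) - 1))) ≤ μ := by
  classical
  obtain ⟨⟨i0, j0, hij0, hμ0⟩, hub⟩ := hμ
  have hμnn : 0 ≤ μ := hμ0 ▸ norm_nonneg _
  have hn2 : 2 ≤ n := by
    have h1 := Fin.val_ne_of_ne hij0
    have h2 := i0.isLt
    have h3 := j0.isLt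
    omega
  have hm1 : 1 ≤ m := by
    by_contra h
    push_neg at h
    interval_cases m
    · have h1 := hunit i0
      have h2 : Φ i0 = 0 := Subsingleton.elim _ _
      rw [h2, norm_zero] at h1
      norm_num at h1
  set A : Matrix (Fin m) (Fin n) ℂ := Matrix.of fun k i => Φ i k with hA
  set G : Matrix (Fin n) (Fin n) ℂ := Aᴴ * A with hG
  set H : Matrix (Fin m) (Fin m) ℂ := A * Aᴴ with hH
  have hGij : ∀ i j, G i j = ⟪Φ i, Φ j⟫_ℂ := by
    intro i j
    simp [hG, Matrix.mul_apply, Matrix.conjTranspose_apply, hA, PiLp.inner_apply,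
      RCLike.inner_apply]
    exact Finset.sum_congr rfl fun _ _ => mul_comm _ _
  have hGsym : ∀ i j, G j i = (starRingEnd ℂ) (G i j) := by
    intro i j
    rw [hGij, hGij, inner_conj_symm]
  have hHsym : ∀ k l, H l k = (starRingEnd ℂ) (H k l) := by
    intro k l
    simp [hH, Matrix.mul_apply, Matrix.conjTranspose_apply, map_sum, mul_comm]
  -- traces
  have traceG : G.trace = (n : ℂ) := by
    have : ∀ i, G i i = (1 : ℂ) := by
      intro i
      rw [hGij, inner_self_eq_norm_sq_to_K, hunit]
      norm_num
    simp [Matrix.trace, Matrix.diag, this]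
  have traceH : H.trace = (n : ℂ) := by
    rw [hH, Matrix.trace_mul_comm, ← hG, traceG]
  have traceHH : (H * H).trace = (G * G).trace := by
    simp only [hH, hG, Matrix.mul_assoc]
    rw [Matrix.trace_mul_comm]
    simp only [Matrix.mul_assoc]
  -- real sums
  set SG : ℝ := ∑ i : Fin n, ∑ j : Fin n, ‖G i j‖ ^ 2 with hSG
  set SH : ℝ := ∑ k : Fin m, ∑ l : Fin m, ‖H k l‖ ^ 2 with hSH
  have traceGGre : (G * G).trace = (SG : ℂ) := by
    rw [hSG]
    push_cast
    simp only [Matrix.trace, Matrix.diag, Matrix.mul_apply]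
    refine Finset.sum_congr rfl fun i _ => Finset.sum_congr rfl fun j _ => ?_
    rw [hGsym i j, Complex.mul_conj]
    rw [Complex.normSq_eq_norm_sq]
    push_cast
    rfl
  have traceHHre : (H * H).trace = (SH : ℂ) := by
    rw [hSH]
    push_cast
    simp only [Matrix.trace, Matrix.diag, Matrix.mul_apply]
    refine Finset.sum_congr rfl fun k _ => Finset.sum_congr rfl fun l _ => ?_
    rw [hHsym k l, Complex.mul_conj]
    rw [Complex.normSq_eq_norm_sq]
    push_cast
    rfl
  have hSGSH : SG = SH := by
    have := traceHH
    rw [traceGGre, traceHHre] at this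
    exact_mod_cast this.symm
  -- Cauchy-Schwarz part : n^2 ≤ m * SH
  have hdiag : (n : ℝ) ≤ ∑ k : Fin m, ‖H k k‖ := by
    have h1 : (n : ℝ) = ‖H.trace‖ := by rw [traceH]; simp
    calc (n : ℝ) = ‖H.trace‖ := h1
      _ = ‖∑ k : Fin m, H k k‖ := by simp [Matrix.trace, Matrix.diag]
      _ ≤ ∑ k : Fin m, ‖H k k‖ := norm_sum_le _ _
  have hcs : (∑ k : Fin m, ‖H k k‖) ^ 2 ≤ (m : ℝ) * ∑ k : Fin m, ‖H k k‖ ^ 2 := by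
    have := sq_sum_le_card_mul_sum_sq (s := (Finset.univ : Finset (Fin m)))
      (f := fun k => ‖H k k‖)
    simpa using this
  have hdiagfull : ∑ k : Fin m, ‖H k k‖ ^ 2 ≤ SH := by
    rw [hSH]
    refine Finset.sum_le_sum fun k _ => ?_
    exact Finset.single_le_sum (f := fun l => ‖H k l‖ ^ 2)
      (fun l _ => by positivity) (Finset.mem_univ k)
  have key1 : (n : ℝ) ^ 2 ≤ (m : ℝ) * SH := by
    have h1 : (n : ℝ) ^ 2 ≤ (∑ k : Fin m, ‖H k k‖) ^ 2 := by
      have := Finset.sum_nonneg (s := (Finset.univ : Finset (Fin m)))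
        (f := fun k => ‖H k k‖) (fun k _ => norm_nonneg _)
      nlinarith [hdiag]
    have h2 : (m : ℝ) * ∑ k : Fin m, ‖H k k‖ ^ 2 ≤ (m : ℝ) * SH := by
      have : (0:ℝ) ≤ (m:ℝ) := by positivity
      nlinarith [hdiagfull]
    linarith [hcs]
  -- bound SG
  have hGoff : ∀ i j : Fin n, i ≠ j → ‖G i j‖ ≤ μ := by
    intro i j hij
    exact hub ⟨i, j, hij, by rw [hGij]⟩
  have key3 : SG ≤ (n : ℝ) * (1 + ((n : ℝ) - 1) * μ ^ 2) := by
    rw [hSG]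
    have hbound : ∀ i : Fin n, ∑ j : Fin n, ‖G i j‖ ^ 2 ≤ 1 + ((n : ℝ) - 1) * μ ^ 2 := by
      intro i
      rw [← Finset.add_sum_erase _ _ (Finset.mem_univ i)]
      have hdiag1 : ‖G i i‖ ^ 2 = 1 := by
        rw [hGij, inner_self_eq_norm_sq_to_K, hunit]
        norm_num
      rw [hdiag1]
      have hoff : ∑ j ∈ Finset.univ.erase i, ‖G i j‖ ^ 2 ≤ ((n : ℝ) - 1) * μ ^ 2 := by
        have hcard : (Finset.univ.erase i).card = n - 1 := by
          rw [Finset.card_erase_of_mem (Finset.mem_univ i), Finset.card_univ, Fintype.card_fin]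
        calc ∑ j ∈ Finset.univ.erase i, ‖G i j‖ ^ 2
            ≤ ∑ j ∈ Finset.univ.erase i, μ ^ 2 := by
              refine Finset.sum_le_sum fun j hj => ?_
              have hij : i ≠ j := (Finset.ne_of_mem_erase hj).symm
              have := hGoff i j hij
              nlinarith [norm_nonneg (G i j)]
          _ = ((n : ℝ) - 1) * μ ^ 2 := by
              rw [Finset.sum_const, hcard, nsmul_eq_mul]
              congr 1
              have : (1:ℕ) ≤ n := by omega
              push_cast [Nat.cast_sub this]
              ring
      linarith
    calc ∑ i : Fin n, ∑ j : Fin n, ‖G i j‖ ^ 2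
        ≤ ∑ i : Fin n, (1 + ((n : ℝ) - 1) * μ ^ 2) := Finset.sum_le_sum fun i _ => hbound i
      _ = (n : ℝ) * (1 + ((n : ℝ) - 1) * μ ^ 2) := by
          rw [Finset.sum_const, Finset.card_univ, Fintype.card_fin, nsmul_eq_mul]
  -- combine
  have hmain : (n : ℝ) ^ 2 ≤ (m : ℝ) * ((n : ℝ) * (1 + ((n : ℝ) - 1) * μ ^ 2)) := by
    rw [← hSGSH] at key1
    have : (0:ℝ) ≤ (m:ℝ) := by positivity
    nlinarith [key1, key3]
  have hmr : (1:ℝ) ≤ (m:ℝ) := by exact_mod_cast hm1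
  have hnr : (2:ℝ) ≤ (n:ℝ) := by exact_mod_cast hn2
  have hden : (0:ℝ) < (m : ℝ) * ((n : ℝ) - 1) := by
    apply mul_pos <;> linarith
  have hfrac : ((n : ℝ) - m) / ((m : ℝ) * ((n : ℝ) - 1)) ≤ μ ^ 2 := by
    rw [div_le_iff₀ hden]
    have hnpos : (0:ℝ) < n := by linarith
    have h1 : (n:ℝ) * ((n:ℝ) - m) ≤ (n:ℝ) * (μ ^ 2 * ((m:ℝ) * ((n:ℝ) - 1))) := by
      have h2 := hmain
      ring_nf at h2 ⊢
      linarith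
    exact le_of_mul_le_mul_left h1 hnpos
  calc Real.sqrt (((n : ℝ) - m) / (m * ((n : ℝ) - 1)))
      ≤ Real.sqrt (μ ^ 2) := Real.sqrt_le_sqrt hfrac
    _ = μ := by rw [Real.sqrt_sq hμnn]
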